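/- Let Γ be a maximal commutative subring of a ring 𝒰 and suppose x ∈ 𝒰 commutes with all of Γ; then x ∈ Γ. Conversely, in the Galois order setting: if 𝒰 is a left or right Galois Γ-order in 𝒦 (with the separation assumption (ℳℳ⁻¹)∩G = 1), then Γ is maximal commutative in 𝒰. -/

import Mathlib

section SkewDefs

variable {L : Type*} [Field L]

/-- Evaluation of `X = Σ x_ν ν ∈ L ∗ ℳ` at `a ∈ L`: `X(a) = Σ x_ν ν(a)`. -/
noncomputable def evalR (X : RingAut L →₀ L) (a : L) : L :=
  X.sum fun ν c => c * ν a

/-- Skew monoid ring multiplication on `RingAut L →₀ L`: `(xμ)(yν) = (x μ(y))(μν)`. -/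
noncomputable def skewMulR (X Y : RingAut L →₀ L) : RingAut L →₀ L :=
  X.sum fun μ x => Y.sum fun ν y => Finsupp.single (μ * ν) (x * μ y)

/-- The action of an automorphism `g` on `ℒ` by `g(aν) = g(a)(gνg⁻¹)`. -/
noncomputable def gactR (g : RingAut L) (X : RingAut L →₀ L) : RingAut L →₀ L :=
  X.sum fun ν c => Finsupp.single (g * ν * g⁻¹) (g c)

/-- Left multiplication of `X ∈ ℒ` by a scalar `k ∈ L`. -/
noncomputable def lsm (k : L) (X : RingAut L →₀ L) : RingAut L →₀ L :=
  X.sum fun ν c => Finsupp.single ν (k * c)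

/-- Right multiplication of `X ∈ ℒ` by a scalar `k ∈ L`: `(cν)·k = (c ν(k)) ν`. -/
noncomputable def rsm (X : RingAut L →₀ L) (k : L) : RingAut L →₀ L :=
  X.sum fun ν c => Finsupp.single ν (c * ν k)

/-- `K = L^G` as a subset of `L`. -/
def KSet (G : Subgroup (RingAut L)) : Set L := {x : L | ∀ g ∈ G, g x = x}

/-- `Γ = Λ^G` as a subset of `L`. -/
def GammaSet (G : Subgroup (RingAut L)) (Λ : Subring L) : Set L :=
  {a : L | a ∈ Λ ∧ ∀ g ∈ G, g a = a}

/-- `𝒰` is a left Galois `Γ`-order: for every finite-dimensional left `K`-subspace `W`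
of `𝒦` (spanned by a finite set `s` of elements of `𝒦`), `W ∩ 𝒰` is finitely generated
as a left `Γ`-module. -/
def LeftOrderProp (G : Subgroup (RingAut L)) (M : Submonoid (RingAut L)) (Λ : Subring L)
    (U : Set (RingAut L →₀ L)) : Prop :=
  ∀ s : Finset (RingAut L →₀ L),
    (∀ w ∈ s, (∀ ν, w ν ≠ 0 → ν ∈ M) ∧ (∀ g ∈ G, gactR g w = w)) →
    ∃ t : Finset (RingAut L →₀ L),
      (↑t : Set (RingAut L →₀ L)) ⊆
        {y | y ∈ AddSubgroup.closure
              {z | ∃ k ∈ KSet G, ∃ w ∈ (↑s : Set (RingAut L →₀ L)), z = lsm k w} ∧ y ∈ U} ∧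
      ∀ y ∈ U, y ∈ AddSubgroup.closure
            {z | ∃ k ∈ KSet G, ∃ w ∈ (↑s : Set (RingAut L →₀ L)), z = lsm k w} →
        y ∈ AddSubgroup.closure
            {z | ∃ γ ∈ GammaSet G Λ, ∃ w ∈ (↑t : Set (RingAut L →₀ L)), z = lsm γ w}

/-- `𝒰` is a right Galois `Γ`-order: the symmetric condition with right `K`-subspaces and
right `Γ`-modules. -/
def RightOrderProp (G : Subgroup (RingAut L)) (M : Submonoid (RingAut L)) (Λ : Subring L)
    (U : Set (RingAut L →₀ L)) : Prop :=
  ∀ s : Finset (RingAut L →₀ L),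
    (∀ w ∈ s, (∀ ν, w ν ≠ 0 → ν ∈ M) ∧ (∀ g ∈ G, gactR g w = w)) →
    ∃ t : Finset (RingAut L →₀ L),
      (↑t : Set (RingAut L →₀ L)) ⊆
        {y | y ∈ AddSubgroup.closure
              {z | ∃ k ∈ KSet G, ∃ w ∈ (↑s : Set (RingAut L →₀ L)), z = rsm w k} ∧ y ∈ U} ∧
      ∀ y ∈ U, y ∈ AddSubgroup.closure
            {z | ∃ k ∈ KSet G, ∃ w ∈ (↑s : Set (RingAut L →₀ L)), z = rsm w k} →
        y ∈ AddSubgroup.closure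
            {z | ∃ γ ∈ GammaSet G Λ, ∃ w ∈ (↑t : Set (RingAut L →₀ L)), z = rsm w γ}

end SkewDefs


section Aux

variable {L : Type*} [Field L]

open Finsupp AddSubgroup

@[simp] lemma ringAut_one_apply (x : L) : (1 : RingAut L) x = x := rfl
@[simp] lemma ringAut_mul_apply (g h : RingAut L) (x : L) : (g * h) x = g (h x) := rfl

lemma skewMulR_single_one_right (X : RingAut L →₀ L) (γ : L) (ν : RingAut L) :
    skewMulR X (Finsupp.single 1 γ) ν = X ν * ν γ := by
  classical
  unfold skewMulR
  rw [Finsupp.sum_apply]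
  have h1 : (X.sum fun μ x => ((Finsupp.single (1:RingAut L) γ).sum
      fun ρ y => Finsupp.single (μ * ρ) (x * μ y)) ν)
      = X.sum fun μ x => if μ = ν then x * μ γ else 0 := by
    apply Finsupp.sum_congr
    intro μ _
    rw [Finsupp.sum_single_index (by simp), mul_one]
    exact Finsupp.single_apply
  rw [h1, Finsupp.sum_ite_eq']
  split_ifs with h
  · rfl
  · rw [Finsupp.notMem_support_iff.mp h, zero_mul]

lemma skewMulR_single_one_left (X : RingAut L →₀ L) (γ : L) (ν : RingAut L) :
    skewMulR (Finsupp.single 1 γ) X ν = γ * X ν := by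
  classical
  unfold skewMulR
  rw [Finsupp.sum_single_index (by simp), Finsupp.sum_apply]
  have h1 : (X.sum fun ρ y => (Finsupp.single ((1:RingAut L) * ρ) (γ * (1:RingAut L) y)) ν)
      = X.sum fun ρ y => if ρ = ν then γ * y else 0 := by
    apply Finsupp.sum_congr
    intro ρ _
    simp only [ringAut_one_apply, one_mul, Finsupp.single_apply]
  rw [h1, Finsupp.sum_ite_eq']
  split_ifs with h
  · rfl
  · rw [Finsupp.notMem_support_iff.mp h, mul_zero]

lemma skewMulR_single_one_single_one (a b : L) :
    skewMulR (Finsupp.single (1:RingAut L) a) (Finsupp.single (1:RingAut L) b)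
      = Finsupp.single (1:RingAut L) (a * b) := by
  unfold skewMulR
  rw [Finsupp.sum_single_index (by simp), Finsupp.sum_single_index (by simp)]
  simp

lemma gactR_single_one (g : RingAut L) (c : L) :
    gactR g (Finsupp.single (1:RingAut L) c) = Finsupp.single (1:RingAut L) (g c) := by
  unfold gactR
  rw [Finsupp.sum_single_index (by simp)]
  simp

lemma lsm_single_one (k c : L) :
    lsm k (Finsupp.single (1:RingAut L) c) = Finsupp.single (1:RingAut L) (k * c) := by
  unfold lsm
  rw [Finsupp.sum_single_index (by simp)]

lemma rsm_single_one (k c : L) :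
    rsm (Finsupp.single (1:RingAut L) c) k = Finsupp.single (1:RingAut L) (c * k) := by
  unfold rsm
  rw [Finsupp.sum_single_index (by simp)]
  simp

end Aux

section Aux2

variable {L : Type*} [Field L]

open Finsupp AddSubgroup

def gammaSubring (G : Subgroup (RingAut L)) (Λ : Subring L) : Subring L where
  carrier := GammaSet G Λ
  mul_mem' := fun ha hb => ⟨Λ.mul_mem ha.1 hb.1,
    fun g hg => by rw [map_mul, ha.2 g hg, hb.2 g hg]⟩
  one_mem' := ⟨Λ.one_mem, fun g _ => map_one g⟩
  add_mem' := fun ha hb => ⟨Λ.add_mem ha.1 hb.1,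
    fun g hg => by rw [map_add, ha.2 g hg, hb.2 g hg]⟩
  zero_mem' := ⟨Λ.zero_mem, fun g _ => map_zero g⟩
  neg_mem' := fun ha => ⟨Λ.neg_mem ha.1, fun g hg => by rw [map_neg, ha.2 g hg]⟩

lemma mem_gammaSubring {G : Subgroup (RingAut L)} {Λ : Subring L} {x : L} :
    x ∈ gammaSubring G Λ ↔ x ∈ GammaSet G Λ := Iff.rfl

lemma addHom_closure_le {A B : Type*} [AddGroup A] [AddGroup B] (f : A →+ B) {s : Set A}
    {t : Set B} (hf : ∀ x ∈ s, f x ∈ AddSubgroup.closure t) {x : A}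
    (hx : x ∈ AddSubgroup.closure s) : f x ∈ AddSubgroup.closure t := by
  refine AddSubgroup.closure_induction hf ?_ ?_ ?_ hx
  · simpa using (AddSubgroup.closure t).zero_mem
  · intro y z _ _ hy hz; rw [map_add]; exact add_mem hy hz
  · intro y _ hy; rw [map_neg]; exact neg_mem hy

lemma exists_denominator (G : Subgroup (RingAut L)) (hGfin : (G : Set (RingAut L)).Finite)
    (Λ : Subring L) (hGΛ : ∀ g ∈ G, ∀ a ∈ Λ, g a ∈ Λ)
    (hfrac : ∀ x : L, ∃ a ∈ Λ, ∃ b ∈ Λ, b ≠ 0 ∧ x = a / b)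
    {x : L} (hx : x ∈ KSet G) :
    ∃ b ∈ GammaSet G Λ, b ≠ 0 ∧ x * b ∈ GammaSet G Λ := by
  classical
  obtain ⟨a, haΛ, b, hbΛ, hb0, hxab⟩ := hfrac x
  set N : L := ∏ g ∈ hGfin.toFinset, g b with hN
  have hmemG : ∀ g ∈ hGfin.toFinset, g ∈ G := fun g hg => hGfin.mem_toFinset.mp hg
  have hNΛ : N ∈ Λ := Subring.prod_mem Λ fun g hg => hGΛ g (hmemG g hg) b hbΛ
  have hNinv : ∀ g₀ ∈ G, g₀ N = N := by
    intro g₀ hg₀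
    rw [hN, map_prod]
    refine Finset.prod_nbij' (fun g => g₀ * g) (fun g => g₀⁻¹ * g) ?_ ?_ ?_ ?_ ?_
    · intro g hg; exact hGfin.mem_toFinset.mpr (G.mul_mem hg₀ (hmemG g hg))
    · intro g hg; exact hGfin.mem_toFinset.mpr (G.mul_mem (G.inv_mem hg₀) (hmemG g hg))
    · intro g _; group
    · intro g _; group
    · intro g _; rfl
  have hN0 : N ≠ 0 := by
    rw [hN]
    refine Finset.prod_ne_zero_iff.mpr fun g _ => ?_
    exact fun h => hb0 (by simpa using congrArg g.symm h)
  have h1mem : (1 : RingAut L) ∈ hGfin.toFinset := hGfin.mem_toFinset.mpr G.one_mem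
  have hsplit : N = b * ∏ g ∈ hGfin.toFinset.erase 1, g b := by
    rw [hN, ← Finset.mul_prod_erase _ _ h1mem]; simp
  have hxNΛ : x * N ∈ Λ := by
    rw [hsplit, hxab, ← mul_assoc, div_mul_cancel₀ a hb0]
    exact Λ.mul_mem haΛ (Subring.prod_mem Λ fun g hg =>
      hGΛ g (hmemG g (Finset.mem_of_mem_erase hg)) b hbΛ)
  exact ⟨N, ⟨hNΛ, hNinv⟩, hN0,
    ⟨hxNΛ, fun g hg => by rw [map_mul, hx g hg, hNinv g hg]⟩⟩

lemma common_denominator (G : Subgroup (RingAut L)) (hGfin : (G : Set (RingAut L)).Finite)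
    (Λ : Subring L) (hGΛ : ∀ g ∈ G, ∀ a ∈ Λ, g a ∈ Λ)
    (hfrac : ∀ x : L, ∃ a ∈ Λ, ∃ b ∈ Λ, b ≠ 0 ∧ x = a / b)
    (T : Finset L) (hT : ∀ k ∈ T, k ∈ KSet G) :
    ∃ b ∈ GammaSet G Λ, b ≠ 0 ∧ ∀ k ∈ T, k * b ∈ GammaSet G Λ := by
  classical
  induction T using Finset.induction_on with
  | empty => exact ⟨1, (gammaSubring G Λ).one_mem, one_ne_zero, by simp⟩
  | insert a s ha ih =>
    obtain ⟨b, hbΓ, hb0, hb⟩ := ih fun k hk => hT k (Finset.mem_insert_of_mem hk)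
    obtain ⟨ba, hbaΓ, hba0, hxa⟩ := exists_denominator G hGfin Λ hGΛ hfrac
      (hT a (Finset.mem_insert_self a s))
    refine ⟨b * ba, (gammaSubring G Λ).mul_mem hbΓ hbaΓ, mul_ne_zero hb0 hba0, ?_⟩
    intro k hk
    rcases Finset.mem_insert.mp hk with rfl | hk
    · have : k * (b * ba) = (k * ba) * b := by ring
      rw [this]
      exact (gammaSubring G Λ).mul_mem hxa hbΓ
    · have : k * (b * ba) = (k * b) * ba := by ring
      rw [this]
      exact (gammaSubring G Λ).mul_mem (hb k hk) hbaΓ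

lemma mem_of_fixes_K (G : Subgroup (RingAut L)) (hGfin : (G : Set (RingAut L)).Finite)
    {ν : RingAut L} (hν : ∀ x ∈ KSet G, ν x = x) : ν ∈ G := by
  haveI : Finite G := hGfin.to_subtype
  let ψ : L →ₐ[FixedPoints.subfield G L] L :=
    { toRingHom := (ν : L →+* L)
      commutes' := fun r => hν r (fun g hg => r.2 ⟨g, hg⟩) }
  obtain ⟨g, hg⟩ := (FixedPoints.toAlgHom_bijective G L).2 ψ
  have h1 : ∀ x : L, (g : RingAut L) x = ν x := by
    intro x
    have := AlgHom.congr_fun hg x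
    exact this
  have h2 : ν = (g : RingAut L) := RingEquiv.ext fun x => (h1 x).symm
  rw [h2]; exact g.2

end Aux2

section Aux3

variable {L : Type*} [Field L]

open Finsupp AddSubgroup

lemma integral_of_powers (G : Subgroup (RingAut L)) (hGfin : (G : Set (RingAut L)).Finite)
    (Λ : Subring L) (hGΛ : ∀ g ∈ G, ∀ a ∈ Λ, g a ∈ Λ)
    (hfrac : ∀ x : L, ∃ a ∈ Λ, ∃ b ∈ Λ, b ≠ 0 ∧ x = a / b)
    (hnoeth : ∀ N : AddSubgroup L, (N : Set L) ⊆ (Λ : Set L) →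
      (∀ γ ∈ GammaSet G Λ, ∀ a ∈ N, γ * a ∈ N) →
      ∃ s : Finset L, (↑s : Set L) ⊆ (N : Set L) ∧
        ∀ y ∈ N, y ∈ AddSubgroup.closure
          {z | ∃ γ ∈ GammaSet G Λ, ∃ w ∈ (↑s : Set L), z = γ * w})
    (c : L) (T : Finset L) (hT : ∀ k ∈ T, k ∈ KSet G)
    (hpow : ∀ n : ℕ, c ^ n ∈ AddSubgroup.closure
      {z | ∃ γ ∈ GammaSet G Λ, ∃ k ∈ (↑T : Set L), z = γ * k}) :
    IsIntegral (gammaSubring G Λ) c := by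
  classical
  obtain ⟨b, hbΓ, hb0, hbden⟩ := common_denominator G hGfin Λ hGΛ hfrac T hT
  set SP : Set L := {z | ∃ γ ∈ GammaSet G Λ, ∃ n : ℕ, z = γ * (c ^ n * b)} with hSP
  set P : AddSubgroup L := AddSubgroup.closure SP with hP
  have hcnb : ∀ n : ℕ, c ^ n * b ∈ AddSubgroup.closure
      {z | ∃ γ ∈ GammaSet G Λ, ∃ k ∈ (↑T : Set L), z = γ * (k * b)} := by
    intro n
    refine addHom_closure_le (AddMonoidHom.mulRight b) ?_ (hpow n)
    rintro x ⟨γ, hγ, k, hk, rfl⟩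
    refine AddSubgroup.subset_closure ⟨γ, hγ, k, hk, ?_⟩
    simp [mul_assoc]
  have hSPΛ : ∀ z ∈ SP, z ∈ Λ.toAddSubgroup := by
    rintro z ⟨γ, hγ, n, rfl⟩
    refine Λ.mul_mem hγ.1 ?_
    have h1 := hcnb n
    have h2 : AddSubgroup.closure {z | ∃ γ ∈ GammaSet G Λ, ∃ k ∈ (↑T : Set L), z = γ * (k * b)}
        ≤ Λ.toAddSubgroup := by
      rw [AddSubgroup.closure_le]
      rintro x ⟨γ', hγ', k, hk, rfl⟩
      exact Λ.mul_mem hγ'.1 (hbden k hk).1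
    exact h2 h1
  have hPΛ : (P : Set L) ⊆ (Λ : Set L) := by
    intro x hx
    exact ((AddSubgroup.closure_le _).mpr hSPΛ) hx
  have hPΓ : ∀ γ ∈ GammaSet G Λ, ∀ a ∈ P, γ * a ∈ P := by
    intro γ hγ a ha
    refine addHom_closure_le (AddMonoidHom.mulLeft γ) ?_ ha
    rintro x ⟨γ', hγ', n, rfl⟩
    refine AddSubgroup.subset_closure ⟨γ * γ', (gammaSubring G Λ).mul_mem hγ hγ', n, ?_⟩
    simp [mul_assoc]
  have hPc : ∀ a ∈ P, c * a ∈ P := by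
    intro a ha
    refine addHom_closure_le (AddMonoidHom.mulLeft c) ?_ ha
    rintro x ⟨γ', hγ', n, rfl⟩
    refine AddSubgroup.subset_closure ⟨γ', hγ', n + 1, ?_⟩
    simp only [AddMonoidHom.coe_mulLeft]
    ring
  obtain ⟨s, hsP, hsspan⟩ := hnoeth P hPΛ hPΓ
  let P' : Submodule (gammaSubring G Λ) L :=
    { carrier := (P : Set L)
      add_mem' := fun hx hy => P.add_mem hx hy
      zero_mem' := P.zero_mem
      smul_mem' := fun γ x hx => hPΓ γ γ.2 x hx }
  let N : Submodule (gammaSubring G Λ) L := Submodule.span (gammaSubring G Λ) (↑s : Set L)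
  have hNP : N ≤ P' := Submodule.span_le.mpr (fun x hx => hsP hx)
  have hPN : ∀ y ∈ P, y ∈ N := by
    intro y hy
    have h1 := hsspan y hy
    have h2 : AddSubgroup.closure {z | ∃ γ ∈ GammaSet G Λ, ∃ w ∈ (↑s : Set L), z = γ * w}
        ≤ N.toAddSubgroup := by
      rw [AddSubgroup.closure_le]
      rintro x ⟨γ, hγ, w, hw, rfl⟩
      exact N.smul_mem ⟨γ, hγ⟩ (Submodule.subset_span hw)
    exact h2 h1
  have hNfg : N.FG := ⟨s, rfl⟩
  have hNbot : N ≠ ⊥ := by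
    intro h
    have hbP : b ∈ P := AddSubgroup.subset_closure ⟨1, (gammaSubring G Λ).one_mem, 0, by simp⟩
    have hbN : b ∈ N := hPN b hbP
    rw [h, Submodule.mem_bot] at hbN
    exact hb0 hbN
  have hstab : ∀ n ∈ N, c • n ∈ N := by
    intro n hn
    have h1 : n ∈ P := hNP hn
    have h2 : c * n ∈ P := hPc n h1
    simpa [smul_eq_mul] using hPN _ h2
  exact isIntegral_of_smul_mem_submodule N hNbot hNfg c hstab

lemma isIntegral_lambda (G : Subgroup (RingAut L)) (Λ : Subring L) {c : L}
    (h : IsIntegral (gammaSubring G Λ) c) : IsIntegral Λ c := by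
  obtain ⟨p, hm, hev⟩ := h
  have hle : gammaSubring G Λ ≤ Λ := fun x hx => hx.1
  refine ⟨p.map (Subring.inclusion hle), hm.map _, ?_⟩
  rw [Polynomial.eval₂_map]
  have heq : (algebraMap (↥Λ) L).comp (Subring.inclusion hle)
      = algebraMap (↥(gammaSubring G Λ)) L := rfl
  rw [heq]
  exact hev

lemma final_step (G : Subgroup (RingAut L)) (hGfin : (G : Set (RingAut L)).Finite)
    (Λ : Subring L) (hGΛ : ∀ g ∈ G, ∀ a ∈ Λ, g a ∈ Λ)
    (hfrac : ∀ x : L, ∃ a ∈ Λ, ∃ b ∈ Λ, b ≠ 0 ∧ x = a / b)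
    (hicl : ∀ x : L, IsIntegral Λ x → x ∈ Λ)
    (hnoeth : ∀ N : AddSubgroup L, (N : Set L) ⊆ (Λ : Set L) →
      (∀ γ ∈ GammaSet G Λ, ∀ a ∈ N, γ * a ∈ N) →
      ∃ s : Finset L, (↑s : Set L) ⊆ (N : Set L) ∧
        ∀ y ∈ N, y ∈ AddSubgroup.closure
          {z | ∃ γ ∈ GammaSet G Λ, ∃ w ∈ (↑s : Set L), z = γ * w})
    (c : L) (hcK : c ∈ KSet G) (T : Finset L) (hT : ∀ k ∈ T, k ∈ KSet G)
    (hpow : ∀ n : ℕ, c ^ n ∈ AddSubgroup.closure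
      {z | ∃ γ ∈ GammaSet G Λ, ∃ k ∈ (↑T : Set L), z = γ * k}) :
    c ∈ GammaSet G Λ :=
  ⟨hicl c (isIntegral_lambda G Λ
      (integral_of_powers G hGfin Λ hGΛ hfrac hnoeth c T hT hpow)), hcK⟩

end Aux3

/-- If `𝒰` is a left or right Galois `Γ`-order in `𝒦` (with the separation assumption),
then `Γ` is maximal commutative in `𝒰`: any element of `𝒰` commuting with all of `Γ`
lies in `Γ`. -/
theorem stmt14 (L : Type*) [Field L] (G : Subgroup (RingAut L))
    (hGfin : (G : Set (RingAut L)).Finite)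
    (M : Submonoid (RingAut L))
    (hsep : ∀ ν₁ ∈ M, ∀ ν₂ ∈ M, ν₁ * ν₂⁻¹ ∈ G → ν₁ = ν₂)
    (hinv : ∀ g ∈ G, ∀ ν ∈ M, g * ν * g⁻¹ ∈ M)
    (Λ : Subring L)
    (hGΛ : ∀ g ∈ G, ∀ a ∈ Λ, g a ∈ Λ)
    (hMΛ : ∀ ν ∈ M, ∀ a : L, a ∈ Λ ↔ ν a ∈ Λ)
    (hfrac : ∀ x : L, ∃ a ∈ Λ, ∃ b ∈ Λ, b ≠ 0 ∧ x = a / b)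
    (hicl : ∀ x : L, IsIntegral Λ x → x ∈ Λ)
    (hnoeth : ∀ N : AddSubgroup L, (N : Set L) ⊆ (Λ : Set L) →
      (∀ γ ∈ GammaSet G Λ, ∀ a ∈ N, γ * a ∈ N) →
      ∃ s : Finset L, (↑s : Set L) ⊆ (N : Set L) ∧
        ∀ y ∈ N, y ∈ AddSubgroup.closure
          {z | ∃ γ ∈ GammaSet G Λ, ∃ w ∈ (↑s : Set L), z = γ * w})
    (U : Set (RingAut L →₀ L))
    (hUK : ∀ X ∈ U, (∀ ν, X ν ≠ 0 → ν ∈ M) ∧ (∀ g ∈ G, gactR g X = X))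
    (hU1 : Finsupp.single (1 : RingAut L) (1 : L) ∈ U)
    (hUring : ∀ X ∈ U, ∀ Y ∈ U, X - Y ∈ U ∧ skewMulR X Y ∈ U)
    (hΓU : ∀ γ ∈ GammaSet G Λ, Finsupp.single (1 : RingAut L) γ ∈ U)
    (hGalL : ∀ X : RingAut L →₀ L, (∀ ν, X ν ≠ 0 → ν ∈ M) → (∀ g ∈ G, gactR g X = X) →
      X ∈ AddSubgroup.closure {Y | ∃ k ∈ KSet G, ∃ u ∈ U, Y = lsm k u})
    (hGalR : ∀ X : RingAut L →₀ L, (∀ ν, X ν ≠ 0 → ν ∈ M) → (∀ g ∈ G, gactR g X = X) →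
      X ∈ AddSubgroup.closure {Y | ∃ k ∈ KSet G, ∃ u ∈ U, Y = rsm u k})
    (hOrd : LeftOrderProp G M Λ U ∨ RightOrderProp G M Λ U) :
    ∀ X ∈ U, (∀ γ ∈ GammaSet G Λ,
        skewMulR X (Finsupp.single (1 : RingAut L) γ)
          = skewMulR (Finsupp.single (1 : RingAut L) γ) X) →
      ∃ γ ∈ GammaSet G Λ, X = Finsupp.single (1 : RingAut L) γ := by
  classical
  intro X hXU hcomm
  -- Step 1: every ν in the support of X fixes Γ, hence K, hence lies in G, hence equals 1.
  have hfix : ∀ ν : RingAut L, X ν ≠ 0 → ∀ γ ∈ GammaSet G Λ, ν γ = γ := by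
    intro ν hν γ hγ
    have h1 := congrArg (fun Z : RingAut L →₀ L => Z ν) (hcomm γ hγ)
    simp only [skewMulR_single_one_right, skewMulR_single_one_left] at h1
    have h2 : X ν * ν γ = X ν * γ := by rw [h1, mul_comm]
    exact mul_left_cancel₀ hν h2
  have hsupp1 : ∀ ν : RingAut L, X ν ≠ 0 → ν = 1 := by
    intro ν hν
    have hνM : ν ∈ M := (hUK X hXU).1 ν hν
    have hνK : ∀ x ∈ KSet G, ν x = x := by
      intro x hx
      obtain ⟨b, hbΓ, hb0, hxb⟩ := exists_denominator G hGfin Λ hGΛ hfrac hx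
      have e1 : ν (x * b) = x * b := hfix ν hν _ hxb
      have e2 : ν b = b := hfix ν hν b hbΓ
      rw [map_mul, e2] at e1
      exact mul_right_cancel₀ hb0 e1
    have hνG : ν ∈ G := mem_of_fixes_K G hGfin hνK
    exact hsep ν hνM 1 M.one_mem (by simpa using hνG)
  set c : L := X 1 with hc
  have hXeq : X = Finsupp.single (1 : RingAut L) c := by
    ext ν
    by_cases hν : ν = 1
    · subst hν; simp [hc]
    · have h0 : X ν = 0 := by
        by_contra h
        exact hν (hsupp1 ν h)
      rw [h0, Finsupp.single_apply, if_neg (fun hh => hν hh.symm)]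
  have hcK : c ∈ KSet G := by
    intro g hg
    have h1 := (hUK X hXU).2 g hg
    rw [hXeq, gactR_single_one] at h1
    have := congrArg (fun Z : RingAut L →₀ L => Z 1) h1
    simpa using this
  have hcKpow : ∀ n : ℕ, c ^ n ∈ KSet G := by
    intro n g hg
    rw [map_pow, hcK g hg]
  have hpowU : ∀ n : ℕ, Finsupp.single (1 : RingAut L) (c ^ n) ∈ U := by
    intro n
    induction n with
    | zero => simpa using hU1
    | succ n ih =>
      have := (hUring _ ih X hXU).2
      rw [hXeq, skewMulR_single_one_single_one, ← pow_succ] at this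
      exact this
  -- Step 2: from the order property, extract a finite T ⊆ K with all powers of c
  -- in the Γ-span of T.
  have hkey : ∃ T : Finset L, (∀ k ∈ T, k ∈ KSet G) ∧
      ∀ n : ℕ, c ^ n ∈ AddSubgroup.closure
        {z | ∃ γ ∈ GammaSet G Λ, ∃ k ∈ (↑T : Set L), z = γ * k} := by
    have hscond : ∀ w ∈ ({Finsupp.single (1 : RingAut L) (1 : L)} : Finset (RingAut L →₀ L)),
        (∀ ν, w ν ≠ 0 → ν ∈ M) ∧ (∀ g ∈ G, gactR g w = w) := by
      intro w hw
      rw [Finset.mem_singleton] at hw; subst hw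
      constructor
      · intro ν hν
        have hν1 : ν = 1 := by
          by_contra h
          exact hν (by rw [Finsupp.single_apply, if_neg (fun hh => h hh.symm)])
        rw [hν1]; exact M.one_mem
      · intro g hg; rw [gactR_single_one, map_one]
    rcases hOrd with hOL | hOR
    · obtain ⟨t, ht1, ht2⟩ := hOL {Finsupp.single 1 1} hscond
      set SL : Set (RingAut L →₀ L) :=
        {z | ∃ k ∈ KSet G, ∃ w ∈ ((({Finsupp.single (1:RingAut L) (1:L)} : Finset (RingAut L →₀ L)) : Set (RingAut L →₀ L))), z = lsm k w} with hSLdef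
      have hSLK : ∀ z ∈ SL, ∃ k ∈ KSet G, z = Finsupp.single (1 : RingAut L) k := by
        rintro z ⟨k, hk, w, hw, rfl⟩
        simp only [Finset.coe_singleton, Set.mem_singleton_iff] at hw
        subst hw
        exact ⟨k, hk, by rw [lsm_single_one, mul_one]⟩
      have hKS : AddSubgroup.closure SL ≤
          { carrier := {z | ∃ k ∈ KSet G, z = Finsupp.single (1 : RingAut L) k}
            add_mem' := by
              rintro x y ⟨k, hk, rfl⟩ ⟨k', hk', rfl⟩
              exact ⟨k + k', fun g hg => by rw [map_add, hk g hg, hk' g hg],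
                (Finsupp.single_add 1 k k').symm⟩
            zero_mem' := ⟨0, fun g hg => map_zero g, (Finsupp.single_zero 1).symm⟩
            neg_mem' := by
              rintro x ⟨k, hk, rfl⟩
              exact ⟨-k, fun g hg => by rw [map_neg, hk g hg],
                (Finsupp.single_neg 1 k).symm⟩ } := by
        rw [AddSubgroup.closure_le]
        intro z hz
        exact hSLK z hz
      have htform : ∀ w ∈ t, w 1 ∈ KSet G ∧ w = Finsupp.single (1 : RingAut L) (w 1) := by
        intro w hw
        have h1 := (ht1 (Finset.mem_coe.mpr hw)).1
        obtain ⟨k, hk, hkeq⟩ := hKS h1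
        have : w 1 = k := by rw [hkeq, Finsupp.single_eq_same]
        rw [this, hkeq]
        exact ⟨hk, rfl⟩
      refine ⟨t.image (fun w => w 1), ?_, ?_⟩
      · intro k hk
        obtain ⟨w, hw, rfl⟩ := Finset.mem_image.mp hk
        exact (htform w hw).1
      · intro n
        have hXnSL : Finsupp.single (1 : RingAut L) (c ^ n) ∈ AddSubgroup.closure SL := by
          refine AddSubgroup.subset_closure ⟨c ^ n, hcKpow n, Finsupp.single 1 1, by simp, ?_⟩
          rw [lsm_single_one, mul_one]
        have h2 := ht2 _ (hpowU n) hXnSL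
        have h3 := addHom_closure_le (Finsupp.applyAddHom (1 : RingAut L))
          (t := {z | ∃ γ ∈ GammaSet G Λ, ∃ k ∈ ((↑(t.image (fun w => w 1))) : Set L), z = γ * k})
          ?_ h2
        · simpa using h3
        · rintro z ⟨γ, hγ, w, hw, rfl⟩
          have hw' : w ∈ t := Finset.mem_coe.mp hw
          obtain ⟨hwK, hwform⟩ := htform w hw'
          refine AddSubgroup.subset_closure ⟨γ, hγ, w 1,
            Finset.mem_coe.mpr (Finset.mem_image_of_mem _ hw'), ?_⟩
          have : lsm γ w = Finsupp.single (1 : RingAut L) (γ * w 1) := by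
            conv_lhs => rw [hwform]
            rw [lsm_single_one]
          simp [this]
    · obtain ⟨t, ht1, ht2⟩ := hOR {Finsupp.single 1 1} hscond
      set SL : Set (RingAut L →₀ L) :=
        {z | ∃ k ∈ KSet G, ∃ w ∈ ((({Finsupp.single (1:RingAut L) (1:L)} : Finset (RingAut L →₀ L)) : Set (RingAut L →₀ L))), z = rsm w k} with hSLdef
      have hSLK : ∀ z ∈ SL, ∃ k ∈ KSet G, z = Finsupp.single (1 : RingAut L) k := by
        rintro z ⟨k, hk, w, hw, rfl⟩
        simp only [Finset.coe_singleton, Set.mem_singleton_iff] at hw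
        subst hw
        exact ⟨k, hk, by rw [rsm_single_one, one_mul]⟩
      have hKS : AddSubgroup.closure SL ≤
          { carrier := {z | ∃ k ∈ KSet G, z = Finsupp.single (1 : RingAut L) k}
            add_mem' := by
              rintro x y ⟨k, hk, rfl⟩ ⟨k', hk', rfl⟩
              exact ⟨k + k', fun g hg => by rw [map_add, hk g hg, hk' g hg],
                (Finsupp.single_add 1 k k').symm⟩
            zero_mem' := ⟨0, fun g hg => map_zero g, (Finsupp.single_zero 1).symm⟩
            neg_mem' := by
              rintro x ⟨k, hk, rfl⟩
              exact ⟨-k, fun g hg => by rw [map_neg, hk g hg],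
                (Finsupp.single_neg 1 k).symm⟩ } := by
        rw [AddSubgroup.closure_le]
        intro z hz
        exact hSLK z hz
      have htform : ∀ w ∈ t, w 1 ∈ KSet G ∧ w = Finsupp.single (1 : RingAut L) (w 1) := by
        intro w hw
        have h1 := (ht1 (Finset.mem_coe.mpr hw)).1
        obtain ⟨k, hk, hkeq⟩ := hKS h1
        have : w 1 = k := by rw [hkeq, Finsupp.single_eq_same]
        rw [this, hkeq]
        exact ⟨hk, rfl⟩
      refine ⟨t.image (fun w => w 1), ?_, ?_⟩
      · intro k hk
        obtain ⟨w, hw, rfl⟩ := Finset.mem_image.mp hk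
        exact (htform w hw).1
      · intro n
        have hXnSL : Finsupp.single (1 : RingAut L) (c ^ n) ∈ AddSubgroup.closure SL := by
          refine AddSubgroup.subset_closure ⟨c ^ n, hcKpow n, Finsupp.single 1 1, by simp, ?_⟩
          rw [rsm_single_one, one_mul]
        have h2 := ht2 _ (hpowU n) hXnSL
        have h3 := addHom_closure_le (Finsupp.applyAddHom (1 : RingAut L))
          (t := {z | ∃ γ ∈ GammaSet G Λ, ∃ k ∈ ((↑(t.image (fun w => w 1))) : Set L), z = γ * k})
          ?_ h2
        · simpa using h3
        · rintro z ⟨γ, hγ, w, hw, rfl⟩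
          have hw' : w ∈ t := Finset.mem_coe.mp hw
          obtain ⟨hwK, hwform⟩ := htform w hw'
          refine AddSubgroup.subset_closure ⟨γ, hγ, w 1,
            Finset.mem_coe.mpr (Finset.mem_image_of_mem _ hw'), ?_⟩
          have : rsm w γ = Finsupp.single (1 : RingAut L) (w 1 * γ) := by
            conv_lhs => rw [hwform]
            rw [rsm_single_one]
          simp [this, mul_comm]
  obtain ⟨T, hTK, hTpow⟩ := hkey
  exact ⟨c, final_step G hGfin Λ hGΛ hfrac hicl hnoeth c hcK T hTK hTpow, hXeq⟩
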